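/- Let t, K be positive integers with K dividing t, let J be a real with 0 ≤ J ≤ 1, and let X_0,…,X_{t−1} be {0,1}-valued random variables such that E[∏_{j ∈ I} X_j] ≤ J^{|I|} for every subset I ⊆ {0,…,t−1}. Let T = (T_0,…,T_{K−1}) be a random row independent of (X_0,…,X_{t−1}). Then P( X_{T_0} = X_{T_1} = ⋯ = X_{T_{K−1}} = 1 ) ≤ J^K. In particular, if n ≥ 1, 0 < j_2 < 1, J ≤ j_2 and K ≥ ln n / ln(1/j_2), then this probability is at most 1/n. (False-positive probability bound for one LSH row.) -/

import Mathlib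

open MeasureTheory ProbabilityTheory

/-- **False-positive probability bound for one LSH row.** Let `K ∣ t`, let
`X_0,…,X_{t−1}` be `{0,1}`-valued random variables with `E[∏_{j∈I} X_j] ≤ J^{|I|}` for
every `I ⊆ [t]`, and let `T = (T_0,…,T_{K−1})` be a random row (the `T_j` mutually
independent, `T_j` uniform on the block `{j(t/K),…,(j+1)(t/K)−1}` — which together is
expressed by the product formula for the joint law of `T`), independent of
`(X_0,…,X_{t−1})`. Then `P(∀ j, X_{T_j} = 1) ≤ J^K`; in particular, if `n ≥ 1`,
`0 < j₂ < 1`, `J ≤ j₂` and `K ≥ ln n / ln(1/j₂)`, this probability is at most `1/n`. -/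
theorem stmt9 {Ω : Type*} [MeasurableSpace Ω] (P : Measure Ω) [IsProbabilityMeasure P]
    (t K : ℕ) (ht : 0 < t) (hK : 0 < K) (hKt : K ∣ t) (J : ℝ)
    (X : Fin t → Ω → ℝ) (hXmeas : ∀ i, Measurable (X i))
    (hX01 : ∀ i ω, X i ω = 0 ∨ X i ω = 1)
    (hmom : ∀ I : Finset (Fin t), ∫ ω, ∏ i ∈ I, X i ω ∂P ≤ J ^ I.card)
    (T : Fin K → Ω → Fin t) (hTmeas : ∀ j, Measurable (T j))
    (hTdist : ∀ v : Fin K → Fin t,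
      P {ω | ∀ j, T j ω = v j}
        = ∏ j : Fin K,
            (if (j : ℕ) * (t / K) ≤ (v j : ℕ) ∧ (v j : ℕ) < ((j : ℕ) + 1) * (t / K)
              then ((K : ENNReal) / (t : ENNReal)) else 0))
    (hindep : IndepFun (fun ω => fun j => T j ω) (fun ω => fun i => X i ω) P) :
    P {ω | ∀ j : Fin K, X (T j ω) ω = 1} ≤ ENNReal.ofReal (J ^ K) ∧
    (∀ (n : ℕ) (j₂ : ℝ), 1 ≤ n → 0 < j₂ → j₂ < 1 → J ≤ j₂ →
      Real.log n / Real.log (1 / j₂) ≤ (K : ℝ) →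
      P {ω | ∀ j : Fin K, X (T j ω) ω = 1} ≤ 1 / (n : ENNReal)) := by
  classical
  set f : Ω → (Fin K → Fin t) := fun ω j => T j ω with hf
  set g : Ω → (Fin t → ℝ) := fun ω i => X i ω with hg
  have hfmeas : Measurable f := measurable_pi_iff.mpr hTmeas
  have hgmeas : Measurable g := measurable_pi_iff.mpr hXmeas
  have hJ0 : 0 ≤ J := by
    have h := hmom {⟨0, ht⟩}
    simp only [Finset.prod_singleton, Finset.card_singleton, pow_one] at h
    have h0 : 0 ≤ ∫ ω, X ⟨0, ht⟩ ω ∂P :=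
      integral_nonneg fun ω => by rcases hX01 ⟨0, ht⟩ ω with h | h <;> simp [h]
    linarith
  -- sets B v in the codomain of g
  set Bv : (Fin K → Fin t) → Set (Fin t → ℝ) := fun v => {y | ∀ j : Fin K, y (v j) = 1}
    with hBv
  have hBvmeas : ∀ v, MeasurableSet (Bv v) := by
    intro v
    have : Bv v = ⋂ j : Fin K, (fun y : Fin t → ℝ => y (v j)) ⁻¹' {1} := by
      ext y; simp [hBv]
    rw [this]
    exact MeasurableSet.iInter fun j => (measurable_pi_apply (v j)) (measurableSet_singleton 1)
  -- bound on P (g ⁻¹' Bv v) for injective v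
  have hBbound : ∀ v : Fin K → Fin t, Function.Injective v →
      P (g ⁻¹' Bv v) ≤ ENNReal.ofReal (J ^ K) := by
    intro v hv
    set I : Finset (Fin t) := Finset.image v Finset.univ with hI
    have hcard : I.card = K := by
      rw [hI, Finset.card_image_of_injective _ hv, Finset.card_univ, Fintype.card_fin]
    have hind : ∀ ω, ∏ i ∈ I, X i ω = (g ⁻¹' Bv v).indicator 1 ω := by
      intro ω
      by_cases hω : ω ∈ g ⁻¹' Bv v
      · rw [Set.indicator_of_mem hω]
        have : ∀ i ∈ I, X i ω = 1 := by
          intro i hi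
          rw [hI, Finset.mem_image] at hi
          obtain ⟨j, -, rfl⟩ := hi
          exact hω j
        simp [Finset.prod_eq_one this]
      · rw [Set.indicator_of_notMem hω]
        have : ∃ j : Fin K, X (v j) ω ≠ 1 := by
          by_contra h
          push_neg at h
          exact hω fun j => h j
        obtain ⟨j, hj⟩ := this
        have hj0 : X (v j) ω = 0 := (hX01 (v j) ω).resolve_right hj
        exact Finset.prod_eq_zero (Finset.mem_image_of_mem v (Finset.mem_univ j)) hj0
    have hmeasB : MeasurableSet (g ⁻¹' Bv v) := hgmeas (hBvmeas v)
    have hint : ∫ ω, ∏ i ∈ I, X i ω ∂P = (P (g ⁻¹' Bv v)).toReal := by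
      rw [show (fun ω => ∏ i ∈ I, X i ω) = (g ⁻¹' Bv v).indicator 1 from funext hind]
      exact integral_indicator_one hmeasB
    have hle : (P (g ⁻¹' Bv v)).toReal ≤ J ^ K := by
      rw [← hint, ← hcard]; exact hmom I
    calc P (g ⁻¹' Bv v) = ENNReal.ofReal ((P (g ⁻¹' Bv v)).toReal) :=
          (ENNReal.ofReal_toReal (measure_ne_top P _)).symm
      _ ≤ ENNReal.ofReal (J ^ K) := ENNReal.ofReal_le_ofReal hle
  -- injectivity from nonzero probability
  have hinj : ∀ v : Fin K → Fin t, P (f ⁻¹' {v}) ≠ 0 → Function.Injective v := by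
    intro v hv0
    have hset : f ⁻¹' {v} = {ω | ∀ j, T j ω = v j} := by
      ext ω; simp [hf, funext_iff]
    rw [hset, hTdist v] at hv0
    have hcond : ∀ j : Fin K,
        (j : ℕ) * (t / K) ≤ (v j : ℕ) ∧ (v j : ℕ) < ((j : ℕ) + 1) * (t / K) := by
      intro j
      by_contra h
      exact hv0 (Finset.prod_eq_zero (Finset.mem_univ j) (if_neg h))
    intro j j' hjj'
    by_contra hne
    rcases lt_or_gt_of_ne (fun h : (j : ℕ) = (j' : ℕ) => hne (Fin.ext h)) with h | h
    · have h1 := (hcond j).2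
      have h2 := (hcond j').1
      have hmul : ((j : ℕ) + 1) * (t / K) ≤ (j' : ℕ) * (t / K) :=
        Nat.mul_le_mul_right _ h
      have hvv : (v j : ℕ) = (v j' : ℕ) := congrArg Fin.val hjj'
      exact absurd hvv (Nat.ne_of_lt (lt_of_lt_of_le h1 (hmul.trans h2)))
    · have h1 := (hcond j').2
      have h2 := (hcond j).1
      have hmul : ((j' : ℕ) + 1) * (t / K) ≤ (j : ℕ) * (t / K) :=
        Nat.mul_le_mul_right _ h
      have hvv : (v j' : ℕ) = (v j : ℕ) := (congrArg Fin.val hjj').symm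
      exact absurd hvv (Nat.ne_of_lt (lt_of_lt_of_le h1 (hmul.trans h2)))
  -- decomposition of the event
  set S : (Fin K → Fin t) → Set Ω := fun v => f ⁻¹' {v} ∩ g ⁻¹' (Bv v) with hS
  have hA : {ω | ∀ j : Fin K, X (T j ω) ω = 1} = ⋃ v, S v := by
    ext ω
    simp only [Set.mem_setOf_eq, Set.mem_iUnion, hS, Set.mem_inter_iff, Set.mem_preimage,
      Set.mem_singleton_iff]
    constructor
    · intro h
      exact ⟨f ω, rfl, fun j => h j⟩
    · rintro ⟨v, hv, h⟩ j
      have hvj : T j ω = v j := congrFun hv j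
      rw [hvj]
      exact h j
  have hSmeas : ∀ v, MeasurableSet (S v) := fun v =>
    (hfmeas (measurableSet_singleton v)).inter (hgmeas (hBvmeas v))
  have hdisj : Pairwise (Function.onFun Disjoint S) := by
    intro v v' hne
    refine Set.disjoint_left.mpr fun ω hω hω' => hne ?_
    have h1 : f ω = v := hω.1
    have h2 : f ω = v' := hω'.1
    rw [← h1, h2]
  have hPA : P {ω | ∀ j : Fin K, X (T j ω) ω = 1} = ∑ v : Fin K → Fin t, P (S v) := by
    rw [hA, measure_iUnion hdisj hSmeas, tsum_fintype]
  have hterm : ∀ v, P (S v) = P (f ⁻¹' {v}) * P (g ⁻¹' Bv v) := fun v =>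
    hindep.measure_inter_preimage_eq_mul _ _ (measurableSet_singleton v) (hBvmeas v)
  have hsum1 : ∑ v : Fin K → Fin t, P (f ⁻¹' {v}) = 1 := by
    have hdisj' : Pairwise (Function.onFun Disjoint fun v : Fin K → Fin t => f ⁻¹' {v}) := by
      intro v v' hne
      refine Set.disjoint_left.mpr fun ω hω hω' => hne ?_
      rw [← Set.mem_singleton_iff.mp hω, Set.mem_singleton_iff.mp hω']
    have hcover : (⋃ v : Fin K → Fin t, f ⁻¹' {v}) = Set.univ := by
      ext ω
      simp only [Set.mem_iUnion, Set.mem_preimage, Set.mem_singleton_iff, Set.mem_univ,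
        iff_true]
      exact ⟨f ω, rfl⟩
    rw [← tsum_fintype (L := SummationFilter.unconditional _), ← measure_iUnion hdisj' fun v => hfmeas (measurableSet_singleton v),
      hcover, measure_univ]
  have key : P {ω | ∀ j : Fin K, X (T j ω) ω = 1} ≤ ENNReal.ofReal (J ^ K) := by
    rw [hPA]
    calc ∑ v : Fin K → Fin t, P (S v)
        ≤ ∑ v : Fin K → Fin t, P (f ⁻¹' {v}) * ENNReal.ofReal (J ^ K) := by
          refine Finset.sum_le_sum fun v _ => ?_
          rw [hterm v]
          by_cases hv0 : P (f ⁻¹' {v}) = 0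
          · simp [hv0]
          · exact mul_le_mul_right (hBbound v (hinj v hv0)) _
      _ = (∑ v : Fin K → Fin t, P (f ⁻¹' {v})) * ENNReal.ofReal (J ^ K) := by
          rw [Finset.sum_mul]
      _ = ENNReal.ofReal (J ^ K) := by rw [hsum1, one_mul]
  refine ⟨key, fun n j₂ hn hj₂0 hj₂1 hJj₂ hKlog => ?_⟩
  have hlogpos : 0 < Real.log (1 / j₂) := by
    apply Real.log_pos
    rw [one_div]
    exact (one_lt_inv_iff₀).mpr ⟨hj₂0, hj₂1⟩
  have hn0 : (0 : ℝ) < n := by exact_mod_cast hn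
  have hlogn : Real.log n ≤ (K : ℝ) * Real.log (1 / j₂) := by
    rw [div_le_iff₀ hlogpos] at hKlog
    exact hKlog
  have hj₂K : j₂ ^ K ≤ 1 / (n : ℝ) := by
    have hpos : 0 < (n : ℝ) * j₂ ^ K := mul_pos hn0 (pow_pos hj₂0 K)
    have hlog : Real.log ((n : ℝ) * j₂ ^ K) ≤ 0 := by
      rw [Real.log_mul (ne_of_gt hn0) (ne_of_gt (pow_pos hj₂0 K)), Real.log_pow]
      have : Real.log (1 / j₂) = - Real.log j₂ := by
        rw [one_div, Real.log_inv]
      rw [this] at hlogn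
      nlinarith
    have hle1 := (Real.log_nonpos_iff hpos.le).mp hlog
    rw [le_div_iff₀ hn0]
    nlinarith
  have hJK : J ^ K ≤ 1 / (n : ℝ) :=
    le_trans (pow_le_pow_left₀ hJ0 hJj₂ K) hj₂K
  calc P {ω | ∀ j : Fin K, X (T j ω) ω = 1} ≤ ENNReal.ofReal (J ^ K) := key
    _ ≤ ENNReal.ofReal (1 / (n : ℝ)) := ENNReal.ofReal_le_ofReal hJK
    _ = 1 / (n : ENNReal) := by
        rw [one_div, ENNReal.ofReal_inv_of_pos hn0, ENNReal.ofReal_natCast, one_div]
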